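/- Lazard's theorem: every flat module over a commutative ring is a filtered colimit of finitely generated free modules. -/

import Mathlib

open CategoryTheory CategoryTheory.Limits

universe u

namespace LazardAux

variable (R : Type u) [CommRing R] (M : Type u) [AddCommGroup M] [Module R M]

structure Idx : Type u where
  n : ℕ
  x : (Fin n → R) →ₗ[R] M

variable {R M}

@[ext]
structure Hom (i j : Idx R M) : Type u where
  g : (Fin i.n → R) →ₗ[R] (Fin j.n → R)
  w : j.x.comp g = i.x

instance : SmallCategory (Idx R M) where
  Hom := Hom
  id i := ⟨LinearMap.id, LinearMap.comp_id _⟩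
  comp f g := ⟨g.g.comp f.g, by rw [← LinearMap.comp_assoc, g.w, f.w]⟩

@[simp] lemma id_g (i : Idx R M) : (𝟙 i : Hom i i).g = LinearMap.id := rfl
@[simp] lemma comp_g {i j k : Idx R M} (f : i ⟶ j) (g : j ⟶ k) :
    (f ≫ g).g = g.g.comp f.g := rfl

variable (R M)

def D : Idx R M ⥤ ModuleCat.{u} R where
  obj i := ModuleCat.of R (Fin i.n → R)
  map f := ModuleCat.ofHom f.g

def c : Cocone (D R M) where
  pt := ModuleCat.of R M
  ι := { app := fun i => ModuleCat.ofHom i.x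
         naturality := fun i j f => by
           dsimp [D]
           rw [Category.comp_id, ← ModuleCat.ofHom_comp]
           exact congrArg ModuleCat.ofHom f.w }

variable {R M}

def single (m : M) : Idx R M :=
  ⟨1, (LinearMap.toSpanSingleton R M m).comp (LinearMap.proj 0)⟩

lemma single_x (m : M) (v : Fin 1 → R) : (single m).x v = v 0 • m := rfl

lemma key (s : Cocone (D R M)) (j : Idx R M) (v : Fin j.n → R) :
    s.ι.app (single (j.x v)) (fun _ => (1 : R)) = s.ι.app j v := by
  let f : single (j.x v) ⟶ j :=
    ⟨LinearMap.smulRight (LinearMap.proj (R := R) (0 : Fin 1)) v, by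
      apply LinearMap.ext; intro w
      simp only [LinearMap.coe_comp, Function.comp_apply, LinearMap.smulRight_apply,
        map_smul, single_x]
      exact map_smul j.x (w (0 : Fin 1)) v⟩
  have hnat : s.ι.app j ((D R M).map f (fun _ => (1 : R)))
      = s.ι.app (single (j.x v)) (fun _ => (1 : R)) := by
    have h := s.ι.naturality f
    simp only [Functor.const_obj_map, Category.comp_id] at h
    exact ConcreteCategory.congr_hom h (fun _ => (1 : R))
  have h1 : (D R M).map f (fun _ => (1 : R)) = v := by
    change f.g (fun _ => (1 : R)) = v
    show ((1 : R) • v) = v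
    simp
  rw [← hnat, h1]

/-- The underlying function of the descent map. -/
def descFun (s : Cocone (D R M)) (m : M) : s.pt := s.ι.app (single m) (fun _ => (1 : R))

lemma descFun_x (s : Cocone (D R M)) (j : Idx R M) (v : Fin j.n → R) :
    descFun s (j.x v) = s.ι.app j v := key s j v

lemma descFun_add (s : Cocone (D R M)) (m m' : M) :
    descFun s (m + m') = descFun s m + descFun s m' := by
  set j2 : Idx R M := ⟨2, (LinearMap.toSpanSingleton R M m).comp (LinearMap.proj 0)
    + (LinearMap.toSpanSingleton R M m').comp (LinearMap.proj 1)⟩ with hj2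
  have h0 : j2.x ![1, 0] = m := by simp [j2]
  have h1 : j2.x ![0, 1] = m' := by simp [j2]
  have hs : j2.x (![1, 0] + ![0, 1]) = m + m' := by rw [map_add, h0, h1]
  rw [← h0, ← h1, ← map_add, descFun_x, descFun_x, descFun_x]
  exact map_add (ConcreteCategory.hom (s.ι.app j2)) _ _

lemma descFun_smul (s : Cocone (D R M)) (r : R) (m : M) :
    descFun s (r • m) = r • descFun s m := by
  have h : (single m).x (fun _ => r) = r • m := single_x m _
  rw [← h, descFun_x]
  have h2 : (fun _ => r : Fin (single (R := R) m).n → R) = r • (fun _ => (1 : R)) := by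
    funext _; simp
  rw [h2]
  simp only [map_smul]
  exact map_smul (ConcreteCategory.hom (s.ι.app (single m))) r (fun _ => (1 : R))

variable (R M)

def isColimit : IsColimit (c R M) where
  desc s := ModuleCat.ofHom { toFun := descFun s
                              map_add' := descFun_add s
                              map_smul' := descFun_smul s }
  fac := by
    intro s j
    apply ModuleCat.hom_ext; apply LinearMap.ext; intro v
    exact descFun_x s j v
  uniq := by
    intro s φ h
    apply ModuleCat.hom_ext; apply LinearMap.ext; intro m
    have hm : (single m).x (fun _ => (1 : R)) = m := by
      exact (single_x (M := M) m _).trans (one_smul R (m : M))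
    calc φ m = φ ((single m).x (fun _ => (1 : R))) := by rw [hm]
      _ = ((c R M).ι.app (single m) ≫ φ) (fun _ => (1 : R)) := rfl
      _ = s.ι.app (single m) (fun _ => (1 : R)) :=
        ConcreteCategory.congr_hom (h (single m)) _
      _ = descFun s m := rfl

variable {R M}

noncomputable def prodEquiv (n m : ℕ) :
    (Fin (n + m) → R) ≃ₗ[R] (Fin n → R) × (Fin m → R) :=
  (LinearEquiv.funCongrLeft R R finSumFinEquiv).trans
    (LinearEquiv.sumArrowLequivProdArrow (Fin n) (Fin m) R R)

instance : Nonempty (Idx R M) := ⟨⟨0, 0⟩⟩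

instance [Module.Flat R M] : IsFilteredOrEmpty (Idx R M) where
  cocone_objs := by
    intro i j
    let E := prodEquiv (R := R) i.n j.n
    refine ⟨⟨i.n + j.n, (i.x.coprod j.x).comp E.toLinearMap⟩,
      ⟨E.symm.toLinearMap.comp (LinearMap.inl R _ _), ?_⟩,
      ⟨E.symm.toLinearMap.comp (LinearMap.inr R _ _), ?_⟩, trivial⟩
    · apply LinearMap.ext; intro v
      simp
    · apply LinearMap.ext; intro v
      simp
  cocone_maps := by
    intro i j f g
    have h : j.x.comp (f.g - g.g) = 0 := by
      rw [LinearMap.comp_sub, f.w, g.w, sub_self]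
    obtain ⟨κ, a, y, hy, ha⟩ :=
      Module.Flat.exists_factorization_of_comp_eq_zero_of_free (R := R) h
    let E2 : (Fin κ →₀ R) ≃ₗ[R] (Fin κ → R) :=
      Finsupp.linearEquivFunOnFinite R R (Fin κ)
    refine ⟨⟨κ, y.comp E2.symm.toLinearMap⟩,
      ⟨E2.toLinearMap.comp a, ?_⟩, ?_⟩
    · apply LinearMap.ext; intro v
      simp [hy]
    · apply Hom.ext
      simp only [comp_g]
      have haf : a.comp f.g = a.comp g.g := by
        apply sub_eq_zero.mp
        rw [← LinearMap.comp_sub]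
        exact ha
      rw [LinearMap.comp_assoc, LinearMap.comp_assoc, haf]

instance [Module.Flat R M] : IsFiltered (Idx R M) := ⟨⟩

end LazardAux

theorem stmt10 (R : Type u) [CommRing R] (M : Type u) [AddCommGroup M] [Module R M]
    [Module.Flat R M] :
    ∃ (J : Type u) (_ : SmallCategory J) (_ : IsFiltered J) (D : J ⥤ ModuleCat.{u} R)
      (c : Cocone D) (_ : IsColimit c),
      (∀ j : J, ∃ n : ℕ, Nonempty (D.obj j ≅ ModuleCat.of R (Fin n → R))) ∧
      Nonempty (c.pt ≅ ModuleCat.of R M) := by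
  exact ⟨LazardAux.Idx R M, inferInstance, inferInstance, LazardAux.D R M, LazardAux.c R M,
    LazardAux.isColimit R M, fun j => ⟨j.n, ⟨Iso.refl _⟩⟩, ⟨Iso.refl _⟩⟩
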